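/- The function g : ℝ → ℝ defined by g(a) = (1 - exp(-a)) / (1 - exp(exp(-a) - 1)) is monotone nondecreasing on the open interval (0, ∞). -/

import Mathlib

open Real Set

lemma aux_denom_pos {t : ℝ} (ht : 0 < t) : 0 < 1 - Real.exp (-t) := by
  have : Real.exp (-t) < 1 := by
    rw [Real.exp_lt_one_iff]; linarith
  linarith

lemma aux_hasDerivAt {t : ℝ} (ht : 0 < t) :
    HasDerivAt (fun t : ℝ => t / (1 - Real.exp (-t)))
      ((1 * (1 - Real.exp (-t)) - t * Real.exp (-t)) / (1 - Real.exp (-t))^2) t := by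
  have h1 : HasDerivAt (fun t : ℝ => t) 1 t := hasDerivAt_id t
  have h2 : HasDerivAt (fun t : ℝ => 1 - Real.exp (-t)) (Real.exp (-t)) t := by
    have := ((Real.hasDerivAt_exp (-t)).comp t ((hasDerivAt_id t).neg))
    have h3 := (hasDerivAt_const t (1:ℝ)).sub this
    simpa using this.const_sub (1:ℝ)
  have hne : 1 - Real.exp (-t) ≠ 0 := ne_of_gt (aux_denom_pos ht)
  exact h1.div h2 hne

lemma aux_h_mono : MonotoneOn (fun t : ℝ => t / (1 - Real.exp (-t))) (Set.Ioi (0:ℝ)) := by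
  have key : StrictMonoOn (fun t : ℝ => t / (1 - Real.exp (-t))) (Set.Ioi (0:ℝ)) := by
    apply strictMonoOn_of_deriv_pos (convex_Ioi 0)
    · intro t ht
      exact (continuousAt_id.div
        (continuous_const.sub (Real.continuous_exp.comp continuous_neg)).continuousAt
        (ne_of_gt (aux_denom_pos ht))).continuousWithinAt
    · intro t ht
      rw [interior_Ioi] at ht
      rw [(aux_hasDerivAt ht).deriv]
      apply div_pos
      · have h1 : t + (1:ℝ) < Real.exp t := Real.add_one_lt_exp (ne_of_gt ht)
        have h2 : 0 < Real.exp (-t) := Real.exp_pos _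
        have h3 : Real.exp (-t) * Real.exp t = 1 := by
          rw [← Real.exp_add]; simp
        nlinarith
      · exact pow_pos (aux_denom_pos ht) 2
  exact key.monotoneOn

theorem stmt_4 :
    MonotoneOn
      (fun a : ℝ => (1 - Real.exp (-a)) / (1 - Real.exp (Real.exp (-a) - 1)))
      (Set.Ioi (0 : ℝ)) := by
  have hf : MonotoneOn (fun a : ℝ => 1 - Real.exp (-a)) (Set.Ioi (0:ℝ)) := by
    intro x _ y _ hxy
    have : Real.exp (-y) ≤ Real.exp (-x) := Real.exp_le_exp.mpr (by linarith)
    simp only; linarith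
  have hmaps : Set.MapsTo (fun a : ℝ => 1 - Real.exp (-a)) (Set.Ioi (0:ℝ)) (Set.Ioi (0:ℝ)) := by
    intro a ha
    exact aux_denom_pos ha
  intro x hx y hy hxy
  have := aux_h_mono (hmaps hx) (hmaps hy) (hf hx hy hxy)
  simp only at this
  simp only
  rw [show Real.exp (-x) - 1 = -(1 - Real.exp (-x)) by ring,
      show Real.exp (-y) - 1 = -(1 - Real.exp (-y)) by ring]
  exact this
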